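/- arXiv:1612.08722 — 3 statements merged into one kernel-verified Lean document; each statement's English description precedes it below -/
import Mathlib

section
/- If A is a subset of a finite abelian group G with |G| ≥ 2, then for every real number c, ∑_{g ∈ G} (R_A(g) − c)² ≥ (|A|⁴/|G| − 2|A|³ + |A|²|G|)/(|G| − 1). -/
def repFnG {G : Type*} [AddCommGroup G] [DecidableEq G] (A : Finset G) (g : G) : ℕ :=
  ((A ×ˢ A).filter (fun p => p.1 + p.2 = g)).card

section aux
variable {G : Type*} [AddCommGroup G] [Fintype G] [DecidableEq G] (A : Finset G)

/-- difference representation function -/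
def diffFnG (d : G) : ℕ := ((A ×ˢ A).filter (fun p => p.1 - p.2 = d)).card

lemma sum_repFnG : ∑ g : G, repFnG A g = A.card ^ 2 := by
  have h := Finset.card_eq_sum_card_fiberwise
    (f := fun p : G × G => p.1 + p.2) (s := A ×ˢ A) (t := Finset.univ)
    (fun x _ => Finset.mem_univ _)
  rw [Finset.card_product] at h
  simp only [repFnG, ← h, sq]

lemma sum_diffFnG : ∑ d : G, diffFnG A d = A.card ^ 2 := by
  have h := Finset.card_eq_sum_card_fiberwise
    (f := fun p : G × G => p.1 - p.2) (s := A ×ˢ A) (t := Finset.univ)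
    (fun x _ => Finset.mem_univ _)
  rw [Finset.card_product] at h
  simp only [diffFnG, ← h, sq]

set_option linter.unusedSectionVars false in
lemma diffFnG_zero : diffFnG A 0 = A.card := by
  have : (A ×ˢ A).filter (fun p => p.1 - p.2 = 0) = A.image (fun a => (a, a)) := by
    ext ⟨x, y⟩
    simp only [Finset.mem_filter, Finset.mem_product, Finset.mem_image, sub_eq_zero,
      Prod.mk.injEq]
    constructor
    · rintro ⟨⟨hx, _⟩, rfl⟩; exact ⟨x, hx, rfl, rfl⟩
    · rintro ⟨a, ha, rfl, rfl⟩; exact ⟨⟨ha, ha⟩, rfl⟩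
  rw [diffFnG, this, Finset.card_image_of_injective]
  intro a b hab; exact (Prod.mk.injEq _ _ _ _).mp hab |>.1

lemma sum_sq_repFnG : ∑ g : G, (repFnG A g) ^ 2 = ∑ d : G, (diffFnG A d) ^ 2 := by
  classical
  set Q : Finset ((G × G) × (G × G)) := (A ×ˢ A) ×ˢ (A ×ˢ A) with hQ
  set T : Finset ((G × G) × (G × G)) :=
    Q.filter (fun q => q.1.1 + q.1.2 = q.2.1 + q.2.2) with hT
  set T' : Finset ((G × G) × (G × G)) :=
    Q.filter (fun q => q.1.1 - q.1.2 = q.2.1 - q.2.2) with hT'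
  have h1 : ∑ g : G, (repFnG A g) ^ 2 = T.card := by
    have hfib := Finset.card_eq_sum_card_fiberwise
      (f := fun q : (G × G) × (G × G) => q.1.1 + q.1.2) (s := T) (t := Finset.univ)
      (fun x _ => Finset.mem_univ _)
    rw [hfib]
    refine Finset.sum_congr rfl (fun g _ => ?_)
    have key : T.filter (fun q => q.1.1 + q.1.2 = g)
        = ((A ×ˢ A).filter (fun r => r.1 + r.2 = g)) ×ˢ
          ((A ×ˢ A).filter (fun r => r.1 + r.2 = g)) := by
      ext ⟨⟨a, b⟩, cc, d⟩
      simp only [hT, hQ, Finset.mem_filter, Finset.mem_product]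
      constructor
      · rintro ⟨⟨⟨⟨ha, hb⟩, hc, hd⟩, heq⟩, hg⟩
        exact ⟨⟨⟨ha, hb⟩, hg⟩, ⟨hc, hd⟩, heq ▸ hg⟩
      · rintro ⟨⟨⟨ha, hb⟩, hg⟩, ⟨hc, hd⟩, hg'⟩
        exact ⟨⟨⟨⟨ha, hb⟩, hc, hd⟩, hg.trans hg'.symm⟩, hg⟩
    rw [key, Finset.card_product, repFnG, sq]
  have h2 : ∑ d : G, (diffFnG A d) ^ 2 = T'.card := by
    have hfib := Finset.card_eq_sum_card_fiberwise
      (f := fun q : (G × G) × (G × G) => q.1.1 - q.1.2) (s := T') (t := Finset.univ)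
      (fun x _ => Finset.mem_univ _)
    rw [hfib]
    refine Finset.sum_congr rfl (fun g _ => ?_)
    have key : T'.filter (fun q => q.1.1 - q.1.2 = g)
        = ((A ×ˢ A).filter (fun r => r.1 - r.2 = g)) ×ˢ
          ((A ×ˢ A).filter (fun r => r.1 - r.2 = g)) := by
      ext ⟨⟨a, b⟩, cc, d⟩
      simp only [hT', hQ, Finset.mem_filter, Finset.mem_product]
      constructor
      · rintro ⟨⟨⟨⟨ha, hb⟩, hc, hd⟩, heq⟩, hg⟩
        exact ⟨⟨⟨ha, hb⟩, hg⟩, ⟨hc, hd⟩, heq ▸ hg⟩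
      · rintro ⟨⟨⟨ha, hb⟩, hg⟩, ⟨hc, hd⟩, hg'⟩
        exact ⟨⟨⟨⟨ha, hb⟩, hc, hd⟩, hg.trans hg'.symm⟩, hg⟩
    rw [key, Finset.card_product, diffFnG, sq]
  have h3 : T.card = T'.card := by
    apply Finset.card_nbij'
      (i := fun q => ((q.1.1, q.2.1), (q.2.2, q.1.2)))
      (j := fun q => ((q.1.1, q.2.2), (q.1.2, q.2.1)))
    · rintro ⟨⟨a, b⟩, cc, d⟩ hq
      change ((a, b), cc, d) ∈ T at hq
      simp only [hT, hT', hQ, Finset.mem_coe, Finset.mem_filter, Finset.mem_product] at hq ⊢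
      obtain ⟨⟨⟨ha, hb⟩, hc, hd⟩, heq⟩ := hq
      refine ⟨⟨⟨ha, hc⟩, hd, hb⟩, ?_⟩
      rw [sub_eq_sub_iff_add_eq_add, heq]
      exact add_comm _ _
    · rintro ⟨⟨a, b⟩, cc, d⟩ hq
      change ((a, b), cc, d) ∈ T' at hq
      simp only [hT, hT', hQ, Finset.mem_coe, Finset.mem_filter, Finset.mem_product] at hq ⊢
      obtain ⟨⟨⟨ha, hb⟩, hc, hd⟩, heq⟩ := hq
      refine ⟨⟨⟨ha, hd⟩, hb, hc⟩, ?_⟩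
      rw [sub_eq_sub_iff_add_eq_add] at heq
      rw [heq]; exact add_comm _ _
    · rintro ⟨⟨a, b⟩, cc, d⟩ _; rfl
    · rintro ⟨⟨a, b⟩, cc, d⟩ _; rfl
  rw [h1, h2, h3]

end aux

theorem stmt12 {G : Type*} [AddCommGroup G] [Fintype G] [DecidableEq G]
    (hG : 2 ≤ Fintype.card G) (A : Finset G) (c : ℝ) :
    ((A.card : ℝ) ^ 4 / Fintype.card G - 2 * A.card ^ 3 + A.card ^ 2 * Fintype.card G) /
        (Fintype.card G - 1) ≤
      ∑ g : G, ((repFnG A g : ℝ) - c) ^ 2 := by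
  classical
  set N : ℝ := (Fintype.card G : ℝ) with hN
  set n : ℝ := (A.card : ℝ) with hn
  have hN2 : (2 : ℝ) ≤ N := by rw [hN]; exact_mod_cast hG
  have hNpos : (0 : ℝ) < N := by linarith
  have hN1 : (0 : ℝ) < N - 1 := by linarith
  have hn0 : (0 : ℝ) ≤ n := by positivity
  have hsumR : ∑ g : G, (repFnG A g : ℝ) = n ^ 2 := by
    rw [hn]; exact_mod_cast congrArg (Nat.cast : ℕ → ℝ) (sum_repFnG A)
  have hexp : ∑ g : G, ((repFnG A g : ℝ) - c) ^ 2
      = (∑ g : G, (repFnG A g : ℝ) ^ 2) - 2 * c * n ^ 2 + N * c ^ 2 := by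
    have : ∀ g : G, ((repFnG A g : ℝ) - c) ^ 2
        = (repFnG A g : ℝ) ^ 2 - 2 * c * (repFnG A g : ℝ) + c ^ 2 := by intro g; ring
    rw [Finset.sum_congr rfl (fun g _ => this g), Finset.sum_add_distrib,
      Finset.sum_sub_distrib, ← Finset.mul_sum, hsumR, Finset.sum_const,
      Finset.card_univ, nsmul_eq_mul, hN]
  have hkey : n ^ 2 + (n ^ 2 - n) ^ 2 / (N - 1) ≤ ∑ g : G, (repFnG A g : ℝ) ^ 2 := by
    have hcast : ∑ g : G, (repFnG A g : ℝ) ^ 2 = ∑ d : G, (diffFnG A d : ℝ) ^ 2 := by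
      exact_mod_cast congrArg (Nat.cast : ℕ → ℝ) (sum_sq_repFnG A)
    rw [hcast]
    have hsplit : ∑ d : G, (diffFnG A d : ℝ) ^ 2
        = (diffFnG A 0 : ℝ) ^ 2 + ∑ d ∈ Finset.univ.erase 0, (diffFnG A d : ℝ) ^ 2 := by
      rw [← Finset.add_sum_erase _ _ (Finset.mem_univ (0 : G))]
    have hsplit' : ∑ d : G, (diffFnG A d : ℝ)
        = (diffFnG A 0 : ℝ) + ∑ d ∈ Finset.univ.erase 0, (diffFnG A d : ℝ) := by
      rw [← Finset.add_sum_erase _ _ (Finset.mem_univ (0 : G))]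
    have hszero : (diffFnG A 0 : ℝ) = n := by rw [hn]; exact_mod_cast diffFnG_zero A
    have hsumD : ∑ d : G, (diffFnG A d : ℝ) = n ^ 2 := by
      rw [hn]; exact_mod_cast congrArg (Nat.cast : ℕ → ℝ) (sum_diffFnG A)
    have herase : ∑ d ∈ Finset.univ.erase 0, (diffFnG A d : ℝ) = n ^ 2 - n := by
      rw [hsplit', hszero] at hsumD; linarith
    have hcard : ((Finset.univ.erase (0 : G)).card : ℝ) = N - 1 := by
      rw [Finset.card_erase_of_mem (Finset.mem_univ _), Finset.card_univ, hN]
      have : 1 ≤ Fintype.card G := by omega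
      push_cast [this]; ring
    have hCS := sq_sum_le_card_mul_sum_sq (s := Finset.univ.erase (0 : G))
      (f := fun d => (diffFnG A d : ℝ))
    rw [herase, hcard] at hCS
    have : (n ^ 2 - n) ^ 2 / (N - 1) ≤ ∑ d ∈ Finset.univ.erase 0, (diffFnG A d : ℝ) ^ 2 :=
      (div_le_iff₀ hN1).mpr (by linarith [hCS])
    rw [hsplit, hszero]
    linarith
  have hquad' : (0 : ℝ) ≤ N * c ^ 2 - 2 * c * n ^ 2 + n ^ 4 / N := by
    have heq : N * c ^ 2 - 2 * c * n ^ 2 + n ^ 4 / N = (N * c - n ^ 2) ^ 2 / N := by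
      field_simp; ring
    rw [heq]; positivity
  have hfinal : (n ^ 4 / N - 2 * n ^ 3 + n ^ 2 * N) / (N - 1)
      = n ^ 2 + (n ^ 2 - n) ^ 2 / (N - 1) - n ^ 4 / N := by
    field_simp
    ring
  rw [hexp, hfinal]
  linarith [hkey, hquad']
end

section
/- There is no set A ⊆ Z_m with 1 ≤ R_A(n) ≤ 3 for all n ∈ Z_m when m ≥ 12; equivalently, Ruzsa's number R_m ≥ 4 for all m ≥ 12. -/
open Finset

def repFn {m : ℕ} (A : Finset (ZMod m)) (n : ZMod m) : ℕ :=
  ((A ×ˢ A).filter (fun p => p.1 + p.2 = n)).card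

section aux
variable {m : ℕ} (A : Finset (ZMod m))

def difFn (t : ZMod m) : ℕ := ((A ×ˢ A).filter (fun p => p.1 - p.2 = t)).card

lemma sum_repFn [NeZero m] : ∑ n : ZMod m, repFn A n = A.card * A.card := by
  have := Finset.card_eq_sum_card_fiberwise
    (s := A ×ˢ A) (t := Finset.univ) (f := fun p => p.1 + p.2) (fun x _ => Finset.mem_univ _)
  simpa [repFn, Finset.card_product] using this.symm

lemma sum_difFn [NeZero m] : ∑ t : ZMod m, difFn A t = A.card * A.card := by
  have := Finset.card_eq_sum_card_fiberwise
    (s := A ×ˢ A) (t := Finset.univ) (f := fun p => p.1 - p.2) (fun x _ => Finset.mem_univ _)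
  simpa [difFn, Finset.card_product] using this.symm

lemma difFn_zero : difFn A 0 = A.card := by
  have h : (A ×ˢ A).filter (fun p => p.1 - p.2 = 0) = A.diag := by
    ext ⟨a, b⟩
    simp only [Finset.mem_filter, Finset.mem_product, Finset.mem_diag, sub_eq_zero]
    constructor
    · rintro ⟨⟨ha, _⟩, h⟩; exact ⟨ha, h⟩
    · rintro ⟨ha, h⟩; exact ⟨⟨ha, by rw [← h]; exact ha⟩, h⟩
  rw [difFn, h, Finset.diag_card]

lemma sum_sq_eq [NeZero m] :
    ∑ n : ZMod m, (repFn A n)^2 = ∑ t : ZMod m, (difFn A t)^2 := by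
  set S1 := ((A ×ˢ A) ×ˢ (A ×ˢ A)).filter (fun q => q.1.1 + q.1.2 = q.2.1 + q.2.2) with hS1
  set S2 := ((A ×ˢ A) ×ˢ (A ×ˢ A)).filter (fun q => q.1.1 - q.1.2 = q.2.1 - q.2.2) with hS2
  have h1 : ∑ n : ZMod m, (repFn A n)^2 = S1.card := by
    have hfib := Finset.card_eq_sum_card_fiberwise
      (s := S1) (t := Finset.univ) (f := fun q => q.1.1 + q.1.2) (fun x _ => Finset.mem_univ _)
    rw [hfib]
    refine Finset.sum_congr rfl fun n _ => ?_
    show repFn A n ^ 2 = (S1.filter (fun q => q.1.1 + q.1.2 = n)).card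
    have he : S1.filter (fun q => q.1.1 + q.1.2 = n) =
        ((A ×ˢ A).filter (fun p => p.1 + p.2 = n)) ×ˢ
        ((A ×ˢ A).filter (fun p => p.1 + p.2 = n)) := by
      ext q
      simp only [hS1, Finset.mem_filter, Finset.mem_product, Finset.filter_filter]
      constructor
      · rintro ⟨⟨h1, h2⟩, h3, h4⟩
        exact ⟨⟨h1, h4⟩, h2, by rw [← h3]; exact h4⟩
      · rintro ⟨⟨h1, h2⟩, h3, h4⟩
        exact ⟨⟨h1, h3⟩, h2.trans h4.symm, h2⟩
    rw [he, Finset.card_product, repFn, sq]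
  have h2 : ∑ t : ZMod m, (difFn A t)^2 = S2.card := by
    have hfib := Finset.card_eq_sum_card_fiberwise
      (s := S2) (t := Finset.univ) (f := fun q => q.1.1 - q.1.2) (fun x _ => Finset.mem_univ _)
    rw [hfib]
    refine Finset.sum_congr rfl fun t _ => ?_
    show difFn A t ^ 2 = (S2.filter (fun q => q.1.1 - q.1.2 = t)).card
    have he : S2.filter (fun q => q.1.1 - q.1.2 = t) =
        ((A ×ˢ A).filter (fun p => p.1 - p.2 = t)) ×ˢ
        ((A ×ˢ A).filter (fun p => p.1 - p.2 = t)) := by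
      ext q
      simp only [hS2, Finset.mem_filter, Finset.mem_product, Finset.filter_filter]
      constructor
      · rintro ⟨⟨h1, h2⟩, h3, h4⟩
        exact ⟨⟨h1, h4⟩, h2, by rw [← h3]; exact h4⟩
      · rintro ⟨⟨h1, h2⟩, h3, h4⟩
        exact ⟨⟨h1, h3⟩, h2.trans h4.symm, h2⟩
    rw [he, Finset.card_product, difFn, sq]
  have h3 : S1.card = S2.card := by
    refine Finset.card_nbij' (fun q => ((q.1.1, q.2.2), (q.2.1, q.1.2)))
      (fun q => ((q.1.1, q.2.2), (q.2.1, q.1.2))) ?_ ?_ ?_ ?_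
    · rintro ⟨⟨a, b⟩, ⟨c, e⟩⟩ hq
      simp only [hS1, hS2, Finset.mem_coe, Finset.mem_filter, Finset.mem_product] at hq ⊢
      obtain ⟨⟨⟨ha, hb⟩, hc, he⟩, hsum⟩ := hq
      exact ⟨⟨⟨ha, he⟩, hc, hb⟩, sub_eq_sub_iff_add_eq_add.mpr hsum⟩
    · rintro ⟨⟨a, b⟩, ⟨c, e⟩⟩ hq
      simp only [hS1, hS2, Finset.mem_coe, Finset.mem_filter, Finset.mem_product] at hq ⊢
      obtain ⟨⟨⟨ha, hb⟩, hc, he⟩, hsum⟩ := hq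
      exact ⟨⟨⟨ha, he⟩, hc, hb⟩, sub_eq_sub_iff_add_eq_add.mp hsum⟩
    · rintro ⟨⟨a, b⟩, ⟨c, e⟩⟩ _; rfl
    · rintro ⟨⟨a, b⟩, ⟨c, e⟩⟩ _; rfl
  rw [h1, h2, h3]

end aux

lemma repFn_parity {m : ℕ} (A : Finset (ZMod m)) (n : ZMod m) :
    repFn A n % 2 = (A.filter (fun a => a + a = n)).card % 2 := by
  classical
  set T := (A ×ˢ A).filter (fun p => p.1 + p.2 = n) with hT
  have hsplit := Finset.card_filter_add_card_filter_not
    (s := T) (p := fun p => p.1 = p.2)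
  have hc1 : (T.filter (fun p => p.1 = p.2)).card = (A.filter (fun a => a + a = n)).card := by
    refine Finset.card_nbij' Prod.fst (fun a => (a, a)) ?_ ?_ ?_ ?_
    · rintro ⟨a, b⟩ hq
      simp only [hT, Finset.mem_coe, Finset.mem_filter, Finset.mem_product] at hq ⊢
      obtain ⟨⟨⟨ha, hb⟩, hn⟩, he⟩ := hq
      exact ⟨ha, by rw [← he] at hn; exact hn⟩
    · intro a ha
      simp only [hT, Finset.mem_coe, Finset.mem_filter, Finset.mem_product] at ha ⊢
      exact ⟨⟨⟨ha.1, ha.1⟩, ha.2⟩, trivial⟩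
    · rintro ⟨a, b⟩ hq
      simp only [hT, Finset.mem_coe, Finset.mem_filter, Finset.mem_product] at hq
      simp [hq.2]
    · intro a _; rfl
  have hc2 : 2 ∣ (T.filter (fun p => ¬ p.1 = p.2)).card := by
    rw [← ZMod.natCast_eq_zero_iff]
    rw [Finset.card_eq_sum_ones, Nat.cast_sum]
    refine Finset.sum_involution (fun p _ => Prod.swap p) ?_ ?_ ?_ ?_
    · intro a ha; decide
    · rintro ⟨a, b⟩ hq _
      simp only [hT, Finset.mem_filter, Finset.mem_product] at hq
      intro hcon
      simp only [Prod.swap, Prod.mk.injEq] at hcon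
      exact hq.2 hcon.2
    · rintro ⟨a, b⟩ hq
      simp only [hT, Finset.mem_filter, Finset.mem_product] at hq ⊢
      obtain ⟨⟨⟨ha, hb⟩, hn⟩, hne⟩ := hq
      exact ⟨⟨⟨hb, ha⟩, by rw [add_comm]; exact hn⟩, fun h => hne h.symm⟩
    · rintro ⟨a, b⟩ _; rfl
  have hrep : repFn A n = T.card := rfl
  omega

theorem stmt13 (m : ℕ) (hm : 12 ≤ m) :
    ¬ ∃ A : Finset (ZMod m), ∀ n : ZMod m, 1 ≤ repFn A n ∧ repFn A n ≤ 3 := by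
  rintro ⟨A, hA⟩
  haveI : NeZero m := ⟨by omega⟩
  classical
  set k := A.card with hk
  have hcard : (Finset.univ : Finset (ZMod m)).card = m := by
    rw [Finset.card_univ, ZMod.card]
  -- parity bound
  have hP : ((Finset.univ : Finset (ZMod m)).filter (fun n => repFn A n ≠ 2)).card ≤ k := by
    refine le_trans (Finset.card_le_card ?_)
      (Finset.card_image_le (f := fun a : ZMod m => a + a) (s := A))
    intro n hn
    simp only [Finset.mem_filter] at hn
    have h12 := hA n
    have hodd : repFn A n % 2 = 1 := by omega
    rw [repFn_parity] at hodd
    have hne : (A.filter (fun a => a + a = n)).Nonempty := by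
      rw [← Finset.card_pos]; omega
    obtain ⟨a, ha⟩ := hne
    simp only [Finset.mem_filter] at ha
    exact Finset.mem_image.mpr ⟨a, ha.1, ha.2⟩
  set K : ℤ := (k : ℤ) with hKdef
  set M : ℤ := (m : ℤ) with hMdef
  have hM : (12:ℤ) ≤ M := by rw [hMdef]; exact_mod_cast hm
  have hK0 : 0 ≤ K := Int.natCast_nonneg k
  have hsumR : ∑ n : ZMod m, ((repFn A n : ℤ)) = K * K := by
    rw [hKdef]; push_cast [← Nat.cast_sum]
    exact_mod_cast sum_repFn A
  set S : ℤ := ∑ n : ZMod m, ((repFn A n : ℤ) - 2)^2 with hS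
  have hSle : S ≤ K := by
    have hpoint : ∀ n : ZMod m, ((repFn A n : ℤ) - 2)^2
        = if repFn A n ≠ 2 then 1 else 0 := by
      intro n
      obtain ⟨hl, hr⟩ := hA n
      interval_cases h : repFn A n <;> norm_num
    have h1 : S = (((Finset.univ : Finset (ZMod m)).filter (fun n => repFn A n ≠ 2)).card : ℤ) := by
      rw [hS, Finset.sum_congr rfl fun n _ => hpoint n, Finset.sum_boole]
    rw [h1, hKdef]
    exact_mod_cast hP
  have htsq : ∀ t : ℤ, t ≤ t^2 ∧ -t ≤ t^2 := by
    intro t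
    constructor <;> nlinarith [sq_nonneg t, sq_nonneg (t-1), sq_nonneg (t+1)]
  have hSge1 : K*K - 2*M ≤ S := by
    have : ∑ n : ZMod m, ((repFn A n : ℤ) - 2) ≤ S := by
      refine Finset.sum_le_sum fun n _ => (htsq _).1
    rw [Finset.sum_sub_distrib, hsumR, Finset.sum_const, hcard] at this
    simp only [nsmul_eq_mul, ← hMdef] at this
    linarith
  have hSge2 : 2*M - K*K ≤ S := by
    have : ∑ n : ZMod m, (2 - (repFn A n : ℤ)) ≤ S := by
      refine Finset.sum_le_sum fun n _ => ?_
      have := (htsq ((repFn A n : ℤ) - 2)).2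
      linarith
    rw [Finset.sum_sub_distrib, hsumR, Finset.sum_const, hcard] at this
    simp only [nsmul_eq_mul, ← hMdef] at this
    linarith
  have hexp : S = (∑ n : ZMod m, (repFn A n : ℤ)^2) - 4*(K*K) + 4*M := by
    calc S = ∑ n : ZMod m, ((repFn A n:ℤ)^2 - 4*(repFn A n:ℤ) + 4) :=
          Finset.sum_congr rfl fun n _ => by ring
      _ = (∑ n : ZMod m, (repFn A n : ℤ)^2) - 4*(K*K) + (m:ℤ)*4 := by
          rw [Finset.sum_add_distrib, Finset.sum_sub_distrib, ← Finset.mul_sum, hsumR,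
            Finset.sum_const, hcard, nsmul_eq_mul]
      _ = _ := by rw [← hMdef]; ring
  -- Cauchy-Schwarz on nonzero differences
  set s0 := (Finset.univ : Finset (ZMod m)).erase 0 with hs0
  have hs0card : (s0.card : ℤ) = M - 1 := by
    rw [hs0, Finset.card_erase_of_mem (Finset.mem_univ _), hcard, Nat.cast_sub (by omega),
      ← hMdef]
    simp
  have hsumD : ∑ t : ZMod m, (difFn A t : ℤ) = K * K := by
    rw [hKdef]; push_cast [← Nat.cast_sum]
    exact_mod_cast sum_difFn A
  have hsplit : (difFn A 0 : ℤ) + ∑ x ∈ (Finset.univ : Finset (ZMod m)).erase 0,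
      (difFn A x : ℤ) = ∑ x : ZMod m, (difFn A x : ℤ) :=
    Finset.add_sum_erase Finset.univ (fun t => (difFn A t : ℤ)) (Finset.mem_univ (0 : ZMod m))
  have hsplit2 : ((difFn A 0 : ℤ))^2 + ∑ x ∈ (Finset.univ : Finset (ZMod m)).erase 0,
      (difFn A x : ℤ)^2 = ∑ x : ZMod m, (difFn A x : ℤ)^2 :=
    Finset.add_sum_erase Finset.univ (fun t => (difFn A t : ℤ)^2) (Finset.mem_univ (0 : ZMod m))
  rw [difFn_zero] at hsplit hsplit2
  have hsum_d0 : ∑ t ∈ s0, (difFn A t : ℤ) = K * K - K := by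
    rw [hs0]; rw [hsumD] at hsplit; rw [hKdef]; linarith
  have hcs := sq_sum_le_card_mul_sum_sq (s := s0) (f := fun t => (difFn A t : ℤ))
  rw [hsum_d0, hs0card] at hcs
  -- total sum of squares
  have hRD : ∑ n : ZMod m, (repFn A n : ℤ)^2 = ∑ t : ZMod m, (difFn A t : ℤ)^2 := by
    push_cast [← Nat.cast_sum]
    exact_mod_cast sum_sq_eq A
  have hDsum : ∑ t : ZMod m, (difFn A t : ℤ)^2 = K^2 + ∑ t ∈ s0, (difFn A t : ℤ)^2 := by
    rw [hs0, ← hsplit2, hKdef]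
  have hkey : (K*K - K)^2 ≤ (M - 1) * (K + 3*(K*K) - 4*M) := by
    have h1 : ∑ t ∈ s0, (difFn A t : ℤ)^2 = S + 3*(K*K) - 4*M := by
      have := hexp
      rw [hRD, hDsum] at this
      linarith
    rw [h1] at hcs
    have hmono : (M - 1) * (S + 3*(K*K) - 4*M) ≤ (M - 1) * (K + 3*(K*K) - 4*M) := by
      exact mul_le_mul_of_nonneg_left (by linarith [hSle]) (by linarith)
    linarith
  nlinarith [hkey, hSge2, hSle, hSge1, sq_nonneg (K-8), sq_nonneg (K*K-2*M), sq_nonneg K,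
    sq_nonneg (M-12), hK0, hM]
end

section
/- There is no set A ⊆ Z_m with 1 ≤ R_A(n) ≤ 5 for all n ∈ Z_m when m > 500; equivalently, Ruzsa's number R_m ≥ 6 for all m > 500. -/
open Finset

section helpers

variable {α β : Type*} [DecidableEq β] [Fintype β]

lemma fiber_sum (s : Finset α) (f : α → β) :
    ∑ b : β, (s.filter fun a => f a = b).card = s.card :=
  (Finset.card_eq_sum_card_fiberwise (f := f) (t := univ) (fun _ _ => mem_univ _)).symm

lemma fiber_sq_sum (s : Finset α) (f : α → β) :
    ∑ b : β, ((s.filter fun a => f a = b)).card ^ 2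
      = ((s ×ˢ s).filter fun p => f p.1 = f p.2).card := by
  rw [Finset.card_eq_sum_card_fiberwise (f := fun p => f p.1) (t := univ)
    (fun _ _ => mem_univ _)]
  refine Finset.sum_congr rfl fun b _ => ?_
  have : (((s ×ˢ s).filter fun p => f p.1 = f p.2).filter fun p => f p.1 = b)
      = (s.filter fun a => f a = b) ×ˢ (s.filter fun a => f a = b) := by
    ext p
    simp only [mem_filter, mem_product]
    constructor
    · rintro ⟨⟨⟨h1, h2⟩, h3⟩, h4⟩
      exact ⟨⟨h1, h4⟩, h2, h3 ▸ h4⟩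
    · rintro ⟨⟨h1, h4⟩, h2, h5⟩
      exact ⟨⟨⟨h1, h2⟩, h4.trans h5.symm⟩, h4⟩
  rw [this, Finset.card_product, sq]

end helpers

lemma sumcard_eq_diffcard {m : ℕ} (A : Finset (ZMod m)) :
    (((A ×ˢ A) ×ˢ (A ×ˢ A)).filter fun q => q.1.1 + q.1.2 = q.2.1 + q.2.2).card
      = (((A ×ˢ A) ×ˢ (A ×ˢ A)).filter fun q => q.1.1 - q.1.2 = q.2.1 - q.2.2).card := by
  apply Finset.card_nbij' (i := fun q => ((q.1.1, q.2.1), (q.2.2, q.1.2)))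
    (j := fun q => ((q.1.1, q.2.2), (q.1.2, q.2.1)))
  · rintro ⟨⟨a, a'⟩, b, b'⟩ hq
    simp only [mem_coe, mem_filter, mem_product] at hq ⊢
    obtain ⟨⟨⟨h1, h2⟩, h3, h4⟩, h5⟩ := hq
    exact ⟨⟨⟨h1, h3⟩, h4, h2⟩, by linear_combination h5⟩
  · rintro ⟨⟨a, a'⟩, b, b'⟩ hq
    simp only [mem_coe, mem_filter, mem_product] at hq ⊢
    obtain ⟨⟨⟨h1, h2⟩, h3, h4⟩, h5⟩ := hq
    exact ⟨⟨⟨h1, h4⟩, h2, h3⟩, by linear_combination h5⟩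
  · rintro ⟨⟨a, a'⟩, b, b'⟩ _; rfl
  · rintro ⟨⟨a, a'⟩, b, b'⟩ _; rfl

lemma even_repFn {m : ℕ} (A : Finset (ZMod m)) (n : ZMod m)
    (hn : n ∉ A.image fun a => a + a) : repFn A n % 2 = 0 := by
  set F := (A ×ˢ A).filter (fun p => p.1 + p.2 = n) with hF
  have key : ∑ _p ∈ F, (1 : ZMod 2) = 0 := by
    apply Finset.sum_involution (g := fun p _ => Prod.swap p)
    · intro a ha; decide
    · intro p hp _
      intro h
      have h1 : p.1 = p.2 := by
        have := congrArg Prod.fst h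
        simpa using this.symm
      simp only [hF, mem_filter, mem_product] at hp
      exact hn (Finset.mem_image.2 ⟨p.1, hp.1.1, by rw [← hp.2, h1]⟩)
    · intro p hp
      simp only [hF, mem_filter, mem_product] at hp ⊢
      exact ⟨⟨hp.1.2, hp.1.1⟩, by rw [← hp.2]; exact add_comm _ _⟩
    · intro p hp; rfl
  have : ((repFn A n : ℕ) : ZMod 2) = 0 := by
    rw [repFn, ← hF]
    simpa using key
  have := (ZMod.natCast_eq_zero_iff _ 2).1 this
  omega

lemma final_ineq (M K : ℤ) (h1 : 500 < M) (h2 : M ≤ K ^ 2) (h3 : K ^ 2 ≤ 5 * M)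
    (hK : 1 ≤ K) : (M - 1) * (5 * K ^ 2 + 3 * K - 8 * M) < (K ^ 2 - K) ^ 2 := by
  nlinarith [sq_nonneg (K ^ 2 - M), sq_nonneg (K ^ 2 - 5 * M),
    mul_pos (lt_trans (by norm_num : (0:ℤ) < 500) h1) (lt_trans (by norm_num : (0:ℤ) < 500) h1),
    sq_nonneg (2 * K ^ 2 - 5 * M),
    mul_nonneg (sub_nonneg.2 h2) (sub_nonneg.2 h3), sq_nonneg K, sq_nonneg (K - 1),
    mul_le_mul_of_nonneg_left h3 (le_of_lt (lt_trans (by norm_num : (0:ℤ) < 500) h1))]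

theorem stmt14 (m : ℕ) (hm : 500 < m) :
    ¬ ∃ A : Finset (ZMod m), ∀ n : ZMod m, 1 ≤ repFn A n ∧ repFn A n ≤ 5 := by
  rintro ⟨A, hA⟩
  haveI : NeZero m := ⟨by omega⟩
  set k := A.card with hk
  have hcard : (Finset.univ : Finset (ZMod m)).card = m := by
    rw [Finset.card_univ, ZMod.card]
  -- sum of representation function
  have hsumR : ∑ n : ZMod m, repFn A n = k * k := by
    have := fiber_sum (A ×ˢ A) (fun p => p.1 + p.2)
    simpa [repFn, Finset.card_product] using this
  -- m ≤ k² ≤ 5m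
  have hlow : m ≤ k * k := by
    calc m = ∑ _n : ZMod m, 1 := by rw [Finset.sum_const, hcard, smul_eq_mul, mul_one]
    _ ≤ ∑ n : ZMod m, repFn A n := Finset.sum_le_sum fun n _ => (hA n).1
    _ = k * k := hsumR
  have hhigh : k * k ≤ 5 * m := by
    calc k * k = ∑ n : ZMod m, repFn A n := hsumR.symm
    _ ≤ ∑ _n : ZMod m, 5 := Finset.sum_le_sum fun n _ => (hA n).2
    _ = 5 * m := by rw [Finset.sum_const, hcard, smul_eq_mul, mul_comm]
  have hk1 : 1 ≤ k := by nlinarith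
  -- difference function
  set D : ZMod m → ℕ := fun d => ((A ×ˢ A).filter fun p => p.1 - p.2 = d).card with hD
  have hsumD : ∑ d : ZMod m, D d = k * k := by
    have := fiber_sum (A ×ˢ A) (fun p => p.1 - p.2)
    simpa [hD, Finset.card_product] using this
  have hD0 : D 0 = k := by
    rw [hD]
    apply Finset.card_nbij' (i := fun p => p.1) (j := fun a => (a, a))
    · rintro ⟨a, b⟩ hp
      simp only [mem_coe, mem_filter, mem_product] at hp
      exact hp.1.1
    · intro a ha
      simp only [mem_coe, mem_filter, mem_product]
      exact ⟨⟨ha, ha⟩, sub_self a⟩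
    · rintro ⟨a, b⟩ hp
      simp only [mem_coe, mem_filter, mem_product] at hp
      have : a = b := by
        have := hp.2
        rwa [sub_eq_zero] at this
      simp [this]
    · intro a ha; rfl
  -- sum of squares identity
  have hsumsq : ∑ n : ZMod m, (repFn A n) ^ 2 = ∑ d : ZMod m, (D d) ^ 2 := by
    simp only [repFn, hD]
    rw [fiber_sq_sum (A ×ˢ A) (fun p => p.1 + p.2),
      fiber_sq_sum (A ×ˢ A) (fun p => p.1 - p.2), sumcard_eq_diffcard]
  -- Cauchy-Schwarz over nonzero differences
  have hcerase : (Finset.univ.erase (0 : ZMod m)).card = m - 1 := by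
    rw [Finset.card_erase_of_mem (mem_univ _), hcard]
  have hsumD' : ∑ d ∈ Finset.univ.erase (0 : ZMod m), D d = k * k - k := by
    have := Finset.sum_erase_add Finset.univ D (mem_univ (0 : ZMod m))
    rw [hsumD, hD0] at this
    omega
  have hcs : ((k * k - k : ℕ) : ℤ) ^ 2
      ≤ ((m : ℤ) - 1) * ∑ d ∈ Finset.univ.erase (0 : ZMod m), (D d : ℤ) ^ 2 := by
    have := sq_sum_le_card_mul_sum_sq (s := Finset.univ.erase (0 : ZMod m))
      (f := fun d => (D d : ℤ))
    rw [hcerase] at this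
    have hm1 : ((m - 1 : ℕ) : ℤ) = (m : ℤ) - 1 := by
      have : 1 ≤ m := by omega
      push_cast [this]; ring
    calc ((k * k - k : ℕ) : ℤ) ^ 2 = (∑ d ∈ Finset.univ.erase (0 : ZMod m), (D d : ℤ)) ^ 2 := by
          rw [← Nat.cast_sum, hsumD']
    _ ≤ ((m - 1 : ℕ) : ℤ) * ∑ d ∈ Finset.univ.erase (0 : ZMod m), (D d : ℤ) ^ 2 := this
    _ = ((m : ℤ) - 1) * ∑ d ∈ Finset.univ.erase (0 : ZMod m), (D d : ℤ) ^ 2 := by rw [hm1]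
  have hsplitsq : ∑ d ∈ Finset.univ.erase (0 : ZMod m), (D d : ℤ) ^ 2
      = (∑ d : ZMod m, (D d : ℤ) ^ 2) - (k : ℤ) ^ 2 := by
    have h := Finset.sum_erase_add Finset.univ (fun d => (D d : ℤ) ^ 2) (mem_univ (0 : ZMod m))
    simp only [hD0] at h
    linarith
  -- upper bound for T = ∑ (R - 3)²
  set B := A.image (fun a => a + a) with hB
  have hterm : ∀ n : ZMod m, ((repFn A n : ℤ) - 3) ^ 2
      ≤ 1 + (if n ∈ B then (3 : ℤ) else 0) := by
    intro n
    by_cases hn : n ∈ B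
    · simp only [hn, if_true]
      have h1 := (hA n).1
      have h2 := (hA n).2
      have c1 : (1 : ℤ) ≤ (repFn A n : ℤ) := by exact_mod_cast h1
      have c2 : (repFn A n : ℤ) ≤ 5 := by exact_mod_cast h2
      nlinarith
    · simp only [hn, if_false]
      have he := even_repFn A n hn
      have h1 := (hA n).1
      have h2 := (hA n).2
      have : repFn A n = 2 ∨ repFn A n = 4 := by omega
      rcases this with h | h <;> rw [h] <;> norm_num
  have hT : ∑ n : ZMod m, ((repFn A n : ℤ) - 3) ^ 2 ≤ (m : ℤ) + 3 * k := by
    calc ∑ n : ZMod m, ((repFn A n : ℤ) - 3) ^ 2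
        ≤ ∑ n : ZMod m, (1 + (if n ∈ B then (3 : ℤ) else 0)) :=
          Finset.sum_le_sum fun n _ => hterm n
    _ = (m : ℤ) + 3 * B.card := by
          rw [Finset.sum_add_distrib, Finset.sum_const, hcard]
          rw [Finset.sum_ite_mem]
          simp only [Finset.univ_inter, Finset.sum_const]
          push_cast
          ring
    _ ≤ (m : ℤ) + 3 * k := by
          have : B.card ≤ k := Finset.card_image_le
          have : (B.card : ℤ) ≤ (k : ℤ) := by exact_mod_cast this
          linarith
  -- expand T
  have hTexp : ∑ n : ZMod m, ((repFn A n : ℤ) - 3) ^ 2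
      = (∑ n : ZMod m, (repFn A n : ℤ) ^ 2) - 6 * (k : ℤ) * k + 9 * m := by
    have : ∀ n : ZMod m, ((repFn A n : ℤ) - 3) ^ 2
        = (repFn A n : ℤ) ^ 2 - 6 * (repFn A n : ℤ) + 9 := by intro n; ring
    rw [Finset.sum_congr rfl fun n _ => this n]
    rw [Finset.sum_add_distrib, Finset.sum_sub_distrib, Finset.sum_const, hcard]
    have hR : ∑ n : ZMod m, (repFn A n : ℤ) = (k : ℤ) * k := by
      rw [← Nat.cast_sum, hsumR]; push_cast; ring
    rw [← Finset.mul_sum, hR]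
    push_cast
    ring
  -- put everything together in ℤ
  have hMK : (m : ℤ) ≤ (k : ℤ) ^ 2 := by rw [sq]; exact_mod_cast hlow
  have hKM : (k : ℤ) ^ 2 ≤ 5 * (m : ℤ) := by rw [sq]; exact_mod_cast hhigh
  have hK1 : (1 : ℤ) ≤ (k : ℤ) := by exact_mod_cast hk1
  have hM500 : (500 : ℤ) < (m : ℤ) := by exact_mod_cast hm
  have hcast : ((k * k - k : ℕ) : ℤ) = (k : ℤ) ^ 2 - (k : ℤ) := by
    have h : k ≤ k * k := Nat.le_mul_of_pos_left k (by omega)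
    push_cast [h]
    ring
  have hS2 : ∑ n : ZMod m, (repFn A n : ℤ) ^ 2 = ∑ d : ZMod m, (D d : ℤ) ^ 2 := by
    exact_mod_cast congrArg (fun x : ℕ => (x : ℤ)) hsumsq
  -- final inequality
  have hfinal : ((k : ℤ) ^ 2 - k) ^ 2 ≤ ((m : ℤ) - 1) * (5 * (k : ℤ) ^ 2 + 3 * k - 8 * m) := by
    rw [← hcast]
    calc ((k * k - k : ℕ) : ℤ) ^ 2
        ≤ ((m : ℤ) - 1) * ∑ d ∈ Finset.univ.erase (0 : ZMod m), (D d : ℤ) ^ 2 := hcs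
    _ = ((m : ℤ) - 1) * ((∑ n : ZMod m, (repFn A n : ℤ) ^ 2) - (k : ℤ) ^ 2) := by
          rw [hsplitsq, hS2]
    _ ≤ ((m : ℤ) - 1) * (5 * (k : ℤ) ^ 2 + 3 * k - 8 * m) := by
          have h1 : (∑ n : ZMod m, (repFn A n : ℤ) ^ 2) - 6 * (k : ℤ) * k + 9 * m
              ≤ (m : ℤ) + 3 * k := by rw [← hTexp]; exact hT
          have h2 : (∑ n : ZMod m, (repFn A n : ℤ) ^ 2) - (k : ℤ) ^ 2
              ≤ 5 * (k : ℤ) ^ 2 + 3 * k - 8 * m := by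
            have hsq : (k : ℤ) ^ 2 = (k : ℤ) * k := sq (k : ℤ)
            linarith
          exact mul_le_mul_of_nonneg_left h2 (by linarith)
  exact absurd hfinal (not_le.2 (final_ineq (m : ℤ) (k : ℤ) hM500 hMK hKM hK1))
end
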